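/- Let d ≥ 1, let W ⊆ ℝ^d be a compact convex set with nonempty interior, and let κ > 0. Let u, v : Ω → ℝ^d be independent random vectors on a probability space (Ω, 𝓕, P), each of whose law is absolutely continuous with respect to Lebesgue measure with a density f satisfying f(x) ≥ κ for all x ∈ W and f(x) = 0 for all x ∉ W. Let M be a nonzero d×d real matrix and z ∈ ℝ^d a fixed vector. Then P( M·u + v + z ∉ W ) > 0. -/

import Mathlib

open MeasureTheory ProbabilityTheory

/-- If a nonempty compact set is invariant under translation by `b`, then `b = 0`. -/
lemma translate_fixed_aux {d : ℕ} {W : Set (Fin d → ℝ)} (hWc : IsCompact W)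
    {c b : Fin d → ℝ} (hc : c ∈ W) (hb : ∀ y ∈ W, y + b ∈ W) : b = 0 := by
  have hiter : ∀ n : ℕ, c + (n : ℝ) • b ∈ W := by
    intro n
    induction n with
    | zero => simpa using hc
    | succ n ih =>
      have := hb _ ih
      have heq : c + ((n : ℝ) + 1) • b = c + (n : ℝ) • b + b := by
        rw [add_smul, one_smul]; abel
      rw [Nat.cast_succ, heq]
      exact this
  obtain ⟨R, hR⟩ := isBounded_iff_forall_norm_le.mp hWc.isBounded
  by_contra hb0
  have hbpos : 0 < ‖b‖ := norm_pos_iff.mpr hb0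
  obtain ⟨n, hn⟩ := exists_nat_gt ((R + ‖c‖) / ‖b‖)
  have h1 : ‖c + (n : ℝ) • b‖ ≤ R := hR _ (hiter n)
  have h2 : (n : ℝ) * ‖b‖ = ‖(n : ℝ) • b‖ := by
    rw [norm_smul, Real.norm_natCast]
  have h3 : ‖(n : ℝ) • b‖ ≤ ‖c + (n : ℝ) • b‖ + ‖c‖ := by
    have := norm_add_le (c + (n : ℝ) • b) (-c)
    simpa [add_comm, add_assoc, add_left_comm] using this
  have h4 : (n : ℝ) * ‖b‖ ≤ R + ‖c‖ := by
    rw [h2]; linarith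
  have h5 : (R + ‖c‖) / ‖b‖ < n := hn
  rw [div_lt_iff₀ hbpos] at h5
  linarith

/-- Every point of a convex set with nonempty interior lies in the closure of the interior. -/
lemma mem_closure_interior_aux {d : ℕ} {W : Set (Fin d → ℝ)} (hW : Convex ℝ W)
    {c x : Fin d → ℝ} (hc : c ∈ interior W) (hx : x ∈ W) : x ∈ closure (interior W) := by
  set s : ℕ → (Fin d → ℝ) := fun n => x + (1 / ((n : ℝ) + 1)) • (c - x) with hs
  have hmem : ∀ n, s n ∈ interior W := by
    intro n
    have hb : (0 : ℝ) < 1 / ((n : ℝ) + 1) := by positivity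
    have hble : (1 : ℝ) / ((n : ℝ) + 1) ≤ 1 := by
      rw [div_le_one (by positivity)]; linarith [Nat.cast_nonneg (α := ℝ) n]
    have := hW.combo_closure_interior_mem_interior (subset_closure hx) hc
      (a := 1 - 1 / ((n : ℝ) + 1)) (b := 1 / ((n : ℝ) + 1))
      (by linarith) hb (by ring)
    have heq : (1 - 1 / ((n : ℝ) + 1)) • x + (1 / ((n : ℝ) + 1)) • c = s n := by
      simp only [hs, smul_sub, sub_smul, one_smul]
      abel
    rwa [heq] at this
  have htend : Filter.Tendsto s Filter.atTop (nhds x) := by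
    have h0 : Filter.Tendsto (fun n : ℕ => 1 / ((n : ℝ) + 1)) Filter.atTop (nhds 0) :=
      tendsto_one_div_add_atTop_nhds_zero_nat
    have := Filter.Tendsto.add (tendsto_const_nhds (x := x) (f := Filter.atTop))
      (h0.smul_const (c - x))
    simpa [hs, one_div] using this
  exact mem_closure_of_tendsto htend (Filter.Eventually.of_forall hmem)

theorem residual_leaves_W_pos_prob
    {Ω : Type*} [MeasurableSpace Ω] (P : Measure Ω) [IsProbabilityMeasure P]
    (d : ℕ) (hd : 1 ≤ d) (W : Set (Fin d → ℝ))
    (hWc : IsCompact W) (hWconv : Convex ℝ W) (hWint : (interior W).Nonempty)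
    (κ : ℝ) (hκ : 0 < κ)
    (u v : Ω → Fin d → ℝ) (hu : Measurable u) (hv : Measurable v)
    (huv : IndepFun u v P)
    (fu fv : (Fin d → ℝ) → ℝ)
    (hulaw : P.map u = volume.withDensity fun x => ENNReal.ofReal (fu x))
    (hvlaw : P.map v = volume.withDensity fun x => ENNReal.ofReal (fv x))
    (hfuW : ∀ x ∈ W, κ ≤ fu x) (hfu0 : ∀ x ∉ W, fu x = 0)
    (hfvW : ∀ x ∈ W, κ ≤ fv x) (hfv0 : ∀ x ∉ W, fv x = 0)
    (M : Matrix (Fin d) (Fin d) ℝ) (hM : M ≠ 0) (z : Fin d → ℝ) :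
    0 < P {ω | M.mulVec (u ω) + v ω + z ∉ W} := by
  by_contra hcon
  rw [not_lt, le_zero_iff] at hcon
  -- the continuous map
  set g : (Fin d → ℝ) × (Fin d → ℝ) → Fin d → ℝ :=
    fun p => M.mulVec p.1 + p.2 + z with hgdef
  have hgcont : Continuous g := by
    have h1 : Continuous fun x : Fin d → ℝ => M.mulVec x :=
      (Matrix.mulVecLin M).continuous_of_finiteDimensional
    exact ((h1.comp continuous_fst).add continuous_snd).add continuous_const
  have hWmeas : MeasurableSet W := hWc.isClosed.measurableSet
  have hSc : IsClosed (g ⁻¹' W) := hWc.isClosed.preimage hgcont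
  -- laws
  haveI : IsProbabilityMeasure (P.map u) := Measure.isProbabilityMeasure_map hu.aemeasurable
  haveI : IsProbabilityMeasure (P.map v) := Measure.isProbabilityMeasure_map hv.aemeasurable
  have hprod : P.map (fun ω => (u ω, v ω)) = (P.map u).prod (P.map v) :=
    (indepFun_iff_map_prod_eq_prod_map_map hu.aemeasurable hv.aemeasurable).mp huv
  have hmap0 : ((P.map u).prod (P.map v)) ((g ⁻¹' W)ᶜ) = 0 := by
    rw [← hprod, Measure.map_apply (hu.prodMk hv) hSc.measurableSet.compl]
    exact hcon
  -- positivity of measures of small balls inside W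
  have hballpos : ∀ (f : (Fin d → ℝ) → ℝ), (∀ x ∈ W, κ ≤ f x) →
      ∀ (a : Fin d → ℝ) (ε : ℝ), 0 < ε → Metric.ball a ε ⊆ W →
      (volume.withDensity fun x => ENNReal.ofReal (f x)) (Metric.ball a ε) ≠ 0 := by
    intro f hf a ε hε hBW
    rw [withDensity_apply _ Metric.isOpen_ball.measurableSet]
    have hmono : ENNReal.ofReal κ * volume (Metric.ball a ε)
        ≤ ∫⁻ x in Metric.ball a ε, ENNReal.ofReal (f x) := by
      rw [← setLIntegral_const]
      exact setLIntegral_mono' Metric.isOpen_ball.measurableSet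
        (fun x hx => ENNReal.ofReal_le_ofReal (hf x (hBW hx)))
    have hpos : 0 < ENNReal.ofReal κ * volume (Metric.ball a ε) :=
      ENNReal.mul_pos (ENNReal.ofReal_pos.mpr hκ).ne' (Metric.measure_ball_pos volume a hε).ne'
    intro h0
    rw [h0] at hmono
    exact (hpos.trans_le hmono).false
  -- key: for all x, y in W, g (x,y) ∈ W
  have key : ∀ x ∈ W, ∀ y ∈ W, g (x, y) ∈ W := by
    by_contra hk
    push_neg at hk
    obtain ⟨x, hx, y, hy, hxy⟩ := hk
    obtain ⟨c0, hc0⟩ := hWint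
    have hcl : (x, y) ∈ closure ((interior W) ×ˢ (interior W)) := by
      rw [closure_prod_eq]
      exact ⟨mem_closure_interior_aux hWconv hc0 hx, mem_closure_interior_aux hWconv hc0 hy⟩
    obtain ⟨p, hp1, hp2⟩ := mem_closure_iff.mp hcl _ hSc.isOpen_compl hxy
    have hopen2 : IsOpen ((g ⁻¹' W)ᶜ ∩ ((interior W) ×ˢ (interior W))) :=
      hSc.isOpen_compl.inter (isOpen_interior.prod isOpen_interior)
    obtain ⟨ε, hε, hball⟩ := Metric.isOpen_iff.mp hopen2 p ⟨hp1, hp2⟩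
    rw [← ball_prod_same] at hball
    have hb1 : Metric.ball p.1 ε ⊆ W := by
      intro a ha
      have : (a, p.2) ∈ Metric.ball p.1 ε ×ˢ Metric.ball p.2 ε :=
        ⟨ha, Metric.mem_ball_self hε⟩
      exact interior_subset (hball this).2.1
    have hb2 : Metric.ball p.2 ε ⊆ W := by
      intro a ha
      have : (p.1, a) ∈ Metric.ball p.1 ε ×ˢ Metric.ball p.2 ε :=
        ⟨Metric.mem_ball_self hε, ha⟩
      exact interior_subset (hball this).2.2
    have hle : ((P.map u).prod (P.map v)) (Metric.ball p.1 ε ×ˢ Metric.ball p.2 ε) = 0 :=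
      le_antisymm (hmap0 ▸ measure_mono (hball.trans Set.inter_subset_left)) zero_le
    rw [Measure.prod_prod] at hle
    rcases mul_eq_zero.mp hle with h | h
    · exact hballpos fu hfuW p.1 ε hε hb1 (by rwa [hulaw] at h)
    · exact hballpos fv hfvW p.2 ε hε hb2 (by rwa [hvlaw] at h)
  -- geometry: deduce M x + z = 0 for all x ∈ W
  have hfix : ∀ x ∈ W, M.mulVec x + z = 0 := by
    intro x hx
    obtain ⟨c0, hc0⟩ := hWint
    refine translate_fixed_aux hWc (interior_subset hc0) (fun y hy => ?_)
    have := key x hx y hy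
    simpa [hgdef, add_comm, add_assoc, add_left_comm] using this
  -- find two points in W with different images under M
  obtain ⟨i, j, hij⟩ : ∃ i j, M i j ≠ 0 := by
    by_contra hc'
    push_neg at hc'
    exact hM (Matrix.ext fun i j => hc' i j)
  obtain ⟨c, hc⟩ := hWint
  obtain ⟨r, hr, hrball⟩ := Metric.isOpen_iff.mp isOpen_interior c hc
  have hcW : c ∈ W := interior_subset hc
  set x2 : Fin d → ℝ := c + (r / 2) • (Pi.single j 1 : Fin d → ℝ) with hx2def
  have hx2W : x2 ∈ W := by
    apply interior_subset
    apply hrball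
    have hnorm : ‖Pi.single (M := fun _ : Fin d => ℝ) j 1‖ ≤ 1 := by
      rw [pi_norm_le_iff_of_nonneg zero_le_one]
      intro k
      by_cases hk : k = j <;> simp [Pi.single_apply, hk]
    have : dist x2 c = ‖(r / 2) • Pi.single (M := fun _ : Fin d => ℝ) j 1‖ := by
      rw [hx2def, dist_eq_norm]
      congr 1
      abel
    rw [Metric.mem_ball, this, norm_smul, Real.norm_eq_abs, abs_of_nonneg (by linarith)]
    nlinarith
  have h1 := hfix c hcW
  have h2 := hfix x2 hx2W
  have heq : M.mulVec x2 = M.mulVec c := by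
    have : M.mulVec x2 + z = M.mulVec c + z := h2.trans h1.symm
    exact add_right_cancel this
  have hmexp : M.mulVec x2 = M.mulVec c + (r / 2) • M.mulVec (Pi.single j 1) := by
    rw [hx2def, Matrix.mulVec_add, Matrix.mulVec_smul]
  rw [hmexp] at heq
  have hzero : (r / 2) • M.mulVec (Pi.single j 1) = 0 := by
    have := congrArg (fun w => w - M.mulVec c) heq
    simpa [add_sub_cancel_left] using this
  have := congrFun hzero i
  rw [Matrix.mulVec_single] at this
  simp only [Pi.smul_apply, smul_eq_mul, mul_one, Pi.zero_apply] at this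
  rcases mul_eq_zero.mp this with h | h
  · linarith
  · exact hij (by simpa [Matrix.col_apply] using h)
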